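/- Lemma (from |I∖H| control, Lemma B.5/sizeH): in the LSBM, let φ ≤ 1/(p̄·(n·p̄)⁵). The probability of the joint event that the number of nodes failing (H1) or (H2) is at most φ/3 and yet |I ∖ H| > φ is at most exp(−(φ·n·p̄/(4(log(n·p̄))⁵))·log(2n/(φ·L·(log(n·p̄))⁵))); equivalently, whenever the number of nodes that do not satisfy (H1) or (H2) is less than φ/3, one has |I ∖ H| ≤ φ with probability at least 1 − exp(−ω(n·p̄)) (in the regime n·p̄ → ∞). -/

import Mathlib

open Finset Filter Real Asymptotics

/-- Unordered pairs of distinct nodes, represented as ordered pairs `(v, w)` with `v < w`. -/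
abbrev Pairs (n : ℕ) : Type := {q : Fin n × Fin n // q.1 < q.2}

/-- A configuration of the LSBM: the cluster assignment `σ` together with the label observed
on each unordered pair of distinct nodes (labels in `{0, …, L}`). -/
abbrev Config (n K L : ℕ) : Type := (Fin n → Fin K) × (Pairs n → Fin (L + 1))

/-- The probability mass of a configuration: nodes get i.i.d. clusters with law `α`, and
conditionally on `σ` the pairs get independent labels with law `p (σ v) (σ w)`. -/
noncomputable def mass {n K L : ℕ} (α : Fin K → ℝ)
    (p : Fin K → Fin K → Fin (L + 1) → ℝ) (c : Config n K L) : ℝ :=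
  (∏ v, α (c.1 v)) * ∏ q : Pairs n, p (c.1 q.1.1) (c.1 q.1.2) (c.2 q)

/-- Probability of a set of configurations under the LSBM law. -/
noncomputable def Pr {n K L : ℕ} (α : Fin K → ℝ)
    (p : Fin K → Fin K → Fin (L + 1) → ℝ) (S : Set (Config n K L)) : ℝ :=
  ∑ c : Config n K L, Set.indicator S (mass α p) c

/-- Expectation of a function of the configuration under the LSBM law. -/
noncomputable def Ex {n K L : ℕ} (α : Fin K → ℝ)
    (p : Fin K → Fin K → Fin (L + 1) → ℝ) (f : Config n K L → ℝ) : ℝ :=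
  ∑ c : Config n K L, mass α p c * f c

/-- `Aobs E ℓ v w = 1` iff the pair `{v, w}` (with `v ≠ w`) received the label `ℓ`. -/
def Aobs {n L : ℕ} (E : Pairs n → Fin (L + 1)) (ℓ : Fin (L + 1)) (v w : Fin n) : ℕ :=
  if h : v < w then (if E ⟨(v, w), h⟩ = ℓ then 1 else 0)
  else if h' : w < v then (if E ⟨(w, v), h'⟩ = ℓ then 1 else 0) else 0

/-- `e(v, S, ℓ)`: the number of nodes `w ∈ S` such that the pair `{v, w}` has label `ℓ`. -/
def eCnt {n L : ℕ} (E : Pairs n → Fin (L + 1)) (v : Fin n) (S : Finset (Fin n))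
    (ℓ : Fin (L + 1)) : ℕ :=
  ∑ w ∈ S, Aobs E ℓ v w

/-- `e(v, S) = Σ_{ℓ=1}^L e(v, S, ℓ)`. -/
def eTot {n L : ℕ} (E : Pairs n → Fin (L + 1)) (v : Fin n) (S : Finset (Fin n)) : ℕ :=
  ∑ ℓ ∈ univ.filter (fun ℓ : Fin (L + 1) => ℓ ≠ 0), eCnt E v S ℓ

/-- The cluster `I_k = {v : σ(v) = k}`. -/
def clusterSet {n K : ℕ} (σ : Fin n → Fin K) (k : Fin K) : Finset (Fin n) :=
  univ.filter fun v => σ v = k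

/-- KL divergence between two probability vectors on `{0, …, L}`. -/
noncomputable def kl {L : ℕ} (x y : Fin (L + 1) → ℝ) : ℝ :=
  ∑ ℓ, x ℓ * Real.log (x ℓ / y ℓ)

/-- Row-stochastic `K × (L+1)` matrices. -/
def IsStochastic {K L : ℕ} (y : Fin K → Fin (L + 1) → ℝ) : Prop :=
  ∀ k, (∀ ℓ, 0 ≤ y k ℓ) ∧ ∑ ℓ, y k ℓ = 1

/-- The divergence `D_{L+}(α, p(i), p(j))`. -/
noncomputable def DLplus {K L : ℕ} (α : Fin K → ℝ)
    (pi pj : Fin K → Fin (L + 1) → ℝ) : ℝ :=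
  sInf { d | ∃ y, IsStochastic y ∧
    d = max (∑ k, α k * kl (y k) (pi k)) (∑ k, α k * kl (y k) (pj k)) }

/-- The divergence `D(α, p)`. -/
noncomputable def Ddiv {K L : ℕ} (α : Fin K → ℝ)
    (p : Fin K → Fin K → Fin (L + 1) → ℝ) : ℝ :=
  sInf { d | ∃ i j, i ≠ j ∧ d = DLplus α (p i) (p j) }

/-- Condition (H1): the degree of `v` is at most `C_{H1}·n·p̄`. -/
def H1cond {n K L : ℕ} (CH1 pb : ℝ) (c : Config n K L) (v : Fin n) : Prop :=
  (eTot c.2 v univ : ℝ) ≤ CH1 * ((n : ℝ) * pb)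

/-- Condition (H2): for `v ∈ I_k`,
`Σ_i Σ_ℓ e(v,I_i,ℓ)·log(p(k,i,ℓ)/p(j,i,ℓ)) ≥ n·p̄/(log(n·p̄))⁴` for all `j ≠ k`. -/
def H2cond {n K L : ℕ} (pb : ℝ) (p : Fin K → Fin K → Fin (L + 1) → ℝ)
    (c : Config n K L) (v : Fin n) : Prop :=
  ∀ j : Fin K, j ≠ c.1 v →
    (n : ℝ) * pb / (Real.log ((n : ℝ) * pb)) ^ 4 ≤
      ∑ i : Fin K, ∑ ℓ : Fin (L + 1),
        (eCnt c.2 v (clusterSet c.1 i) ℓ : ℝ) * Real.log (p (c.1 v) i ℓ / p j i ℓ)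

/-- A set `S` is good if every `v ∈ S` satisfies (H1), (H2), and (H3) with respect to `S`,
i.e. `e(v, I∖S) ≤ 2·n·p̄/(log(n·p̄))⁵`. -/
def GoodSet {n K L : ℕ} (CH1 pb : ℝ) (p : Fin K → Fin K → Fin (L + 1) → ℝ)
    (c : Config n K L) (S : Finset (Fin n)) : Prop :=
  ∀ v ∈ S, H1cond CH1 pb c v ∧ H2cond pb p c v ∧
    (eTot c.2 v (univ \ S) : ℝ) ≤ 2 * ((n : ℝ) * pb) / (Real.log ((n : ℝ) * pb)) ^ 5

open Classical in
/-- The set `H`: the largest subset of `I` all of whose elements satisfy (H1)–(H3), obtained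
as the union of all good sets (the family of good sets is closed under unions). -/
noncomputable def Hset {n K L : ℕ} (CH1 pb : ℝ) (p : Fin K → Fin K → Fin (L + 1) → ℝ)
    (c : Config n K L) : Finset (Fin n) :=
  ((univ : Finset (Finset (Fin n))).filter fun S => GoodSet CH1 pb p c S).sup id


section Aux

open Classical

variable {n K L : ℕ}

lemma aux_mass_nonneg (α : Fin K → ℝ) (p : Fin K → Fin K → Fin (L+1) → ℝ)
    (hα : ∀ k, 0 ≤ α k) (hp : ∀ i j ℓ, 0 ≤ p i j ℓ) (c : Config n K L) :
    0 ≤ mass α p c :=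
  mul_nonneg (Finset.prod_nonneg fun _ _ => hα _) (Finset.prod_nonneg fun _ _ => hp _ _ _)

lemma aux_sum_alpha (α : Fin K → ℝ) (hαsum : ∑ k, α k = 1) :
    ∑ σ : Fin n → Fin K, ∏ v, α (σ v) = 1 := by
  have := (Fintype.prod_sum (fun (_ : Fin n) (k : Fin K) => α k)).symm
  rw [this]
  simp [hαsum]

lemma aux_Pr_le_sum {ι : Type*} (α : Fin K → ℝ) (p : Fin K → Fin K → Fin (L+1) → ℝ)
    (hα : ∀ k, 0 ≤ α k) (hp : ∀ i j ℓ, 0 ≤ p i j ℓ)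
    (A : Finset ι) (f : ι → Set (Config n K L)) (S : Set (Config n K L))
    (hS : ∀ c ∈ S, ∃ i ∈ A, c ∈ f i) :
    Pr α p S ≤ ∑ i ∈ A, Pr α p (f i) := by
  unfold Pr
  rw [Finset.sum_comm]
  refine Finset.sum_le_sum fun c _ => ?_
  by_cases hc : c ∈ S
  · obtain ⟨i, hiA, hifi⟩ := hS c hc
    rw [Set.indicator_of_mem hc]
    have h1 : mass α p c = Set.indicator (f i) (mass α p) c := (Set.indicator_of_mem hifi _).symm
    rw [h1]
    exact Finset.single_le_sum (f := fun i => Set.indicator (f i) (mass α p) c)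
      (fun j _ => Set.indicator_nonneg (fun x _ => aux_mass_nonneg α p hα hp x) c) hiA
  · rw [Set.indicator_of_notMem hc]
    exact Finset.sum_nonneg fun j _ =>
      Set.indicator_nonneg (fun x _ => aux_mass_nonneg α p hα hp x) c

lemma aux_card_ne_zero : (univ.filter (fun ℓ : Fin (L+1) => ℓ ≠ 0)).card = L := by
  rw [Finset.filter_ne' univ (0 : Fin (L+1)), Finset.card_erase_of_mem (mem_univ _)]
  simp

lemma aux_Pr_all_labeled (α : Fin K → ℝ) (p : Fin K → Fin K → Fin (L+1) → ℝ)
    (hα : ∀ k, 0 ≤ α k) (hαsum : ∑ k, α k = 1)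
    (hp : ∀ i j ℓ, 0 ≤ p i j ℓ) (hpsum : ∀ i j, ∑ ℓ, p i j ℓ = 1)
    (pb : ℝ) (hpb : 0 ≤ pb) (hub : ∀ i j ℓ, ℓ ≠ 0 → p i j ℓ ≤ pb)
    (F : Finset (Pairs n)) :
    Pr α p {c : Config n K L | ∀ q ∈ F, c.2 q ≠ 0} ≤ ((L : ℝ) * pb) ^ F.card := by
  have hLpb : (0:ℝ) ≤ (L:ℝ) * pb := mul_nonneg (Nat.cast_nonneg _) hpb
  unfold Pr
  rw [Fintype.sum_prod_type]
  have key : ∀ σ : Fin n → Fin K,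
      (∑ E : Pairs n → Fin (L+1),
        Set.indicator {c : Config n K L | ∀ q ∈ F, c.2 q ≠ 0} (mass α p) (σ, E))
      ≤ (∏ v, α (σ v)) * ((L : ℝ) * pb) ^ F.card := by
    intro σ
    set g : Pairs n → Fin (L+1) → ℝ :=
      fun q ℓ => if q ∈ F ∧ ℓ = 0 then 0 else p (σ q.1.1) (σ q.1.2) ℓ with hg
    have hrw : ∀ E : Pairs n → Fin (L+1),
        Set.indicator {c : Config n K L | ∀ q ∈ F, c.2 q ≠ 0} (mass α p) (σ, E)
        = (∏ v, α (σ v)) * ∏ q : Pairs n, g q (E q) := by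
      intro E
      by_cases hE : ∀ q ∈ F, E q ≠ 0
      · rw [Set.indicator_of_mem (show (σ, E) ∈ {c : Config n K L | ∀ q ∈ F, c.2 q ≠ 0} from hE)]
        unfold mass
        congr 1
        refine Finset.prod_congr rfl fun q _ => ?_
        simp only [hg]
        by_cases hqF : q ∈ F
        · rw [if_neg]; rintro ⟨_, h0⟩; exact hE q hqF h0
        · rw [if_neg]; rintro ⟨h, _⟩; exact hqF h
      · rw [Set.indicator_of_notMem (show (σ, E) ∉ {c : Config n K L | ∀ q ∈ F, c.2 q ≠ 0} from hE)]
        push_neg at hE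
        obtain ⟨q, hqF, hq0⟩ := hE
        rw [Finset.prod_eq_zero (Finset.mem_univ q), mul_zero]
        simp [hg, hqF, hq0]
    calc ∑ E : Pairs n → Fin (L+1),
        Set.indicator {c : Config n K L | ∀ q ∈ F, c.2 q ≠ 0} (mass α p) (σ, E)
        = (∏ v, α (σ v)) * ∑ E : Pairs n → Fin (L+1), ∏ q : Pairs n, g q (E q) := by
          rw [Finset.mul_sum]; exact Finset.sum_congr rfl fun E _ => hrw E
      _ = (∏ v, α (σ v)) * ∏ q : Pairs n, ∑ ℓ, g q ℓ := by
          rw [Fintype.prod_sum (fun q ℓ => g q ℓ)]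
      _ ≤ (∏ v, α (σ v)) * ((L : ℝ) * pb) ^ F.card := by
          refine mul_le_mul_of_nonneg_left ?_ (Finset.prod_nonneg fun _ _ => hα _)
          have hbd : ∀ q : Pairs n, ∑ ℓ, g q ℓ ≤ (if q ∈ F then (L:ℝ) * pb else 1) := by
            intro q
            by_cases hqF : q ∈ F
            · simp only [hqF, if_true]
              have : ∑ ℓ, g q ℓ ≤ ∑ ℓ : Fin (L+1), (if ℓ = 0 then 0 else pb) := by
                refine Finset.sum_le_sum fun ℓ _ => ?_
                simp only [hg, hqF, true_and]
                by_cases hℓ : ℓ = 0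
                · simp [hℓ]
                · simp only [hℓ, if_false]; exact hub _ _ _ hℓ
              refine this.trans ?_
              rw [Finset.sum_ite, Finset.sum_const, Finset.sum_const]
              have : (univ.filter (fun ℓ : Fin (L+1) => ¬ ℓ = 0)).card = L := aux_card_ne_zero
              simp [this, nsmul_eq_mul]
            · simp only [hqF, if_false]
              have : ∀ ℓ, g q ℓ = p (σ q.1.1) (σ q.1.2) ℓ := by
                intro ℓ; simp [hg, hqF]
              rw [Finset.sum_congr rfl fun ℓ _ => this ℓ]
              exact le_of_eq (hpsum _ _)
          calc ∏ q : Pairs n, ∑ ℓ, g q ℓ ≤ ∏ q : Pairs n, (if q ∈ F then (L:ℝ) * pb else 1) := by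
                refine Finset.prod_le_prod (fun q _ => Finset.sum_nonneg fun ℓ _ => ?_) fun q _ => hbd q
                simp only [hg]
                split
                · exact le_refl 0
                · exact hp _ _ _
            _ = ((L : ℝ) * pb) ^ F.card := by
                rw [Finset.prod_ite_mem univ F (fun _ => (L:ℝ)*pb), Finset.univ_inter,
                  Finset.prod_const]
  calc (∑ σ : Fin n → Fin K, ∑ E : Pairs n → Fin (L+1),
        Set.indicator {c : Config n K L | ∀ q ∈ F, c.2 q ≠ 0} (mass α p) (σ, E))
      ≤ ∑ σ : Fin n → Fin K, (∏ v, α (σ v)) * ((L : ℝ) * pb) ^ F.card :=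
        Finset.sum_le_sum fun σ _ => key σ
    _ = ((L : ℝ) * pb) ^ F.card := by
        rw [← Finset.sum_mul, aux_sum_alpha α hαsum, one_mul]

end Aux
section Comb
open Classical

variable {n K L : ℕ}

/-- pairs with both endpoints in `T` -/
noncomputable def pairsIn {n : ℕ} (T : Finset (Fin n)) : Finset (Pairs n) :=
  univ.filter fun q => q.1.1 ∈ T ∧ q.1.2 ∈ T

/-- labeled pairs with both endpoints in `T` -/
noncomputable def labPairs {n L : ℕ} (E : Pairs n → Fin (L+1)) (T : Finset (Fin n)) :
    Finset (Pairs n) :=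
  univ.filter fun q => q.1.1 ∈ T ∧ q.1.2 ∈ T ∧ E q ≠ 0

lemma labPairs_subset_pairsIn (E : Pairs n → Fin (L+1)) (T : Finset (Fin n)) :
    labPairs E T ⊆ pairsIn T := by
  intro q hq
  unfold labPairs at hq
  unfold pairsIn
  rw [Finset.mem_filter] at hq ⊢
  exact ⟨hq.1, hq.2.1, hq.2.2.1⟩

lemma labPairs_mono (E : Pairs n → Fin (L+1)) {T T' : Finset (Fin n)} (h : T ⊆ T') :
    labPairs E T ⊆ labPairs E T' := by
  intro q hq
  unfold labPairs at hq ⊢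
  rw [Finset.mem_filter] at hq ⊢
  exact ⟨hq.1, h hq.2.1, h hq.2.2.1, hq.2.2.2⟩

lemma aux_pairsIn_card (T : Finset (Fin n)) : (pairsIn T).card ≤ T.card * T.card := by
  have h : (pairsIn T).card ≤ (T ×ˢ T).card := by
    refine Finset.card_le_card_of_injOn (fun q => q.1) (fun q hq => ?_) ?_
    · unfold pairsIn at hq
      rw [Finset.mem_coe, Finset.mem_filter] at hq
      exact Finset.mem_product.mpr ⟨hq.2.1, hq.2.2⟩
    · intro q1 _ q2 _ h
      exact Subtype.ext h
  simpa [Finset.card_product] using h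

/-- the set of labeled pairs joining `v` and `w` (a singleton or empty) -/
noncomputable def Jset {n L : ℕ} (E : Pairs n → Fin (L+1)) (v w : Fin n) : Finset (Pairs n) :=
  univ.filter fun q : Pairs n =>
    E q ≠ 0 ∧ ((q.1.1 = v ∧ q.1.2 = w) ∨ (q.1.1 = w ∧ q.1.2 = v))

lemma aux_jj (E : Pairs n → Fin (L+1)) (v w : Fin n) (hvw : v ≠ w) :
    ∑ ℓ ∈ univ.filter (fun ℓ : Fin (L+1) => ℓ ≠ 0), Aobs E ℓ v w = (Jset E v w).card := by
  rcases hvw.lt_or_gt with h | h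
  · have hA : ∀ ℓ, Aobs E ℓ v w = if E ⟨(v,w), h⟩ = ℓ then 1 else 0 := by
      intro ℓ; unfold Aobs; rw [dif_pos h]
    have hset : Jset E v w = if E ⟨(v,w), h⟩ ≠ 0 then {(⟨(v,w), h⟩ : Pairs n)} else ∅ := by
      unfold Jset
      ext q
      simp only [Finset.mem_filter, Finset.mem_univ, true_and]
      split
      · next h0 =>
        simp only [Finset.mem_singleton]
        constructor
        · rintro ⟨hq0, (⟨h1, h2⟩ | ⟨h1, h2⟩)⟩
          · apply Subtype.ext
            exact Prod.ext h1 h2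
          · exfalso
            have hq := q.2
            rw [h1, h2] at hq
            exact absurd h (not_lt.mpr hq.le)
        · rintro rfl
          exact ⟨h0, Or.inl ⟨rfl, rfl⟩⟩
      · next h0 =>
        simp only [Finset.notMem_empty, iff_false]
        rintro ⟨hq0, (⟨h1, h2⟩ | ⟨h1, h2⟩)⟩
        · apply hq0
          have : q = (⟨(v,w), h⟩ : Pairs n) := Subtype.ext (Prod.ext h1 h2)
          rw [this] at hq0 ⊢
          exact not_ne_iff.mp h0
        · have hq := q.2
          rw [h1, h2] at hq
          exact absurd h (not_lt.mpr hq.le)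
    rw [Finset.sum_congr rfl fun ℓ _ => hA ℓ, Finset.sum_ite_eq, hset]
    by_cases h0 : E ⟨(v,w), h⟩ = 0 <;> simp [h0]
  · have hA : ∀ ℓ, Aobs E ℓ v w = if E ⟨(w,v), h⟩ = ℓ then 1 else 0 := by
      intro ℓ; unfold Aobs; rw [dif_neg (asymm h), dif_pos h]
    have hset : Jset E v w = if E ⟨(w,v), h⟩ ≠ 0 then {(⟨(w,v), h⟩ : Pairs n)} else ∅ := by
      unfold Jset
      ext q
      simp only [Finset.mem_filter, Finset.mem_univ, true_and]
      split
      · next h0 =>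
        simp only [Finset.mem_singleton]
        constructor
        · rintro ⟨hq0, (⟨h1, h2⟩ | ⟨h1, h2⟩)⟩
          · exfalso
            have hq := q.2
            rw [h1, h2] at hq
            exact absurd h (not_lt.mpr hq.le)
          · apply Subtype.ext
            exact Prod.ext h1 h2
        · rintro rfl
          exact ⟨h0, Or.inr ⟨rfl, rfl⟩⟩
      · next h0 =>
        simp only [Finset.notMem_empty, iff_false]
        rintro ⟨hq0, (⟨h1, h2⟩ | ⟨h1, h2⟩)⟩
        · have hq := q.2
          rw [h1, h2] at hq
          exact absurd h (not_lt.mpr hq.le)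
        · apply hq0
          have : q = (⟨(w,v), h⟩ : Pairs n) := Subtype.ext (Prod.ext h1 h2)
          rw [this] at hq0 ⊢
          exact not_ne_iff.mp h0
    rw [Finset.sum_congr rfl fun ℓ _ => hA ℓ, Finset.sum_ite_eq, hset]
    by_cases h0 : E ⟨(w,v), h⟩ = 0 <;> simp [h0]

lemma aux_eTot_biUnion (E : Pairs n → Fin (L+1)) (v : Fin n) (T : Finset (Fin n))
    (hv : v ∉ T) : eTot E v T = (T.biUnion (Jset E v)).card := by
  rw [Finset.card_biUnion]
  · unfold eTot eCnt
    rw [Finset.sum_comm]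
    refine Finset.sum_congr rfl fun w hw => ?_
    exact aux_jj E v w (fun hvw => hv (hvw ▸ hw))
  · intro w₁ h₁ w₂ h₂ hne
    refine Finset.disjoint_left.mpr fun q hq1 hq2 => ?_
    unfold Jset at hq1 hq2
    rw [Finset.mem_filter] at hq1 hq2
    have hv1 : v ≠ w₁ := fun h => hv (h ▸ h₁)
    have hv2 : v ≠ w₂ := fun h => hv (h ▸ h₂)
    rcases hq1.2.2 with ⟨a1, b1⟩ | ⟨a1, b1⟩ <;> rcases hq2.2.2 with ⟨a2, b2⟩ | ⟨a2, b2⟩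
    · exact hne (b1.symm.trans b2)
    · exact hv2 (a1.symm.trans a2)
    · exact hv1 (a2.symm.trans a1)
    · exact hne (a1.symm.trans a2)

lemma aux_insert_card (E : Pairs n → Fin (L+1)) (v : Fin n) (T : Finset (Fin n))
    (hv : v ∉ T) :
    (labPairs E T).card + eTot E v T ≤ (labPairs E (insert v T)).card := by
  have hsub1 : labPairs E T ⊆ labPairs E (insert v T) :=
    labPairs_mono E (Finset.subset_insert v T)
  have hsub2 : T.biUnion (Jset E v) ⊆ labPairs E (insert v T) \ labPairs E T := by
    intro q hq
    rw [Finset.mem_biUnion] at hq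
    obtain ⟨w, hw, hq⟩ := hq
    unfold Jset at hq
    rw [Finset.mem_filter] at hq
    rw [Finset.mem_sdiff]
    constructor
    · unfold labPairs
      rw [Finset.mem_filter]
      refine ⟨Finset.mem_univ _, ?_, ?_, hq.2.1⟩
      · rcases hq.2.2 with ⟨a, _⟩ | ⟨a, _⟩
        · rw [a]; exact Finset.mem_insert_self v T
        · rw [a]; exact Finset.mem_insert_of_mem hw
      · rcases hq.2.2 with ⟨_, b⟩ | ⟨_, b⟩
        · rw [b]; exact Finset.mem_insert_of_mem hw
        · rw [b]; exact Finset.mem_insert_self v T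
    · unfold labPairs
      rw [Finset.mem_filter]
      rintro ⟨_, hq1, hq2, _⟩
      rcases hq.2.2 with ⟨a, _⟩ | ⟨_, b⟩
      · exact hv (a ▸ hq1)
      · exact hv (b ▸ hq2)
  have h1 := Finset.card_le_card hsub2
  have h2 := Finset.card_sdiff_add_card_eq_card hsub1
  rw [← aux_eTot_biUnion E v T hv] at h1
  omega

lemma aux_good_subset_Hset {CH1 pb : ℝ} {p : Fin K → Fin K → Fin (L+1) → ℝ}
    {c : Config n K L} {S : Finset (Fin n)} (h : GoodSet CH1 pb p c S) :
    S ⊆ Hset CH1 pb p c := by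
  have hmem : S ∈ (univ : Finset (Finset (Fin n))).filter
      (fun S => GoodSet CH1 pb p c S) := Finset.mem_filter.mpr ⟨Finset.mem_univ _, h⟩
  exact Finset.le_sup (f := id) hmem

end Comb
section Peel
open Classical

variable {n K L : ℕ}

lemma aux_peel (CH1 pb : ℝ) (p : Fin K → Fin K → Fin (L+1) → ℝ) (c : Config n K L) (φ : ℝ)
    (hB : ((univ.filter fun v =>
        ¬(H1cond CH1 pb c v ∧ H2cond pb p c v)).card : ℝ) ≤ φ / 3)
    (hH : φ < ((univ \ Hset CH1 pb p c).card : ℝ))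
    (hφ0 : 0 ≤ φ)
    (m : ℕ) (hm : (m : ℝ) ≤ φ / 2 + 1) :
    ∀ t, t ≤ m → ∃ T : Finset (Fin n),
      (univ.filter fun v => ¬(H1cond CH1 pb c v ∧ H2cond pb p c v)) ⊆ T ∧
      T.card = (univ.filter fun v =>
        ¬(H1cond CH1 pb c v ∧ H2cond pb p c v)).card + t ∧
      (t : ℝ) * (2 * ((n:ℝ) * pb) / (Real.log ((n:ℝ) * pb)) ^ 5) ≤ ((labPairs c.2 T).card : ℝ) := by
  set Bset := univ.filter fun v => ¬(H1cond CH1 pb c v ∧ H2cond pb p c v) with hBset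
  intro t
  induction t with
  | zero =>
    intro _
    exact ⟨Bset, subset_rfl, by simp, by simp [Nat.cast_nonneg]⟩
  | succ t ih =>
    intro hts
    obtain ⟨T, hBT, hTcard, hTlab⟩ := ih (Nat.le_of_succ_le hts)
    -- the complement of T is not a good set
    have hTφ : (T.card : ℝ) ≤ φ := by
      rw [hTcard]
      push_cast
      have ht : (t : ℝ) + 1 ≤ (m : ℝ) := by exact_mod_cast hts
      linarith
    have hgood : ¬ GoodSet CH1 pb p c (univ \ T) := by
      intro hg
      have hsub := aux_good_subset_Hset hg
      have hsub2 : univ \ Hset CH1 pb p c ⊆ T := by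
        intro x hx
        rw [Finset.mem_sdiff] at hx
        by_contra hxT
        exact hx.2 (hsub (Finset.mem_sdiff.mpr ⟨Finset.mem_univ x, hxT⟩))
      have := Finset.card_le_card hsub2
      have : ((univ \ Hset CH1 pb p c).card : ℝ) ≤ (T.card : ℝ) := by exact_mod_cast this
      linarith
    unfold GoodSet at hgood
    push_neg at hgood
    obtain ⟨v, hvmem, hv3⟩ := hgood
    have hvT : v ∉ T := (Finset.mem_sdiff.mp hvmem).2
    have hvB : H1cond CH1 pb c v ∧ H2cond pb p c v := by
      by_contra hcon
      exact hvT (hBT (Finset.mem_filter.mpr ⟨Finset.mem_univ v, hcon⟩))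
    have hv3' := hv3 hvB.1 hvB.2
    rw [Finset.sdiff_sdiff_self_left, Finset.univ_inter] at hv3'
    refine ⟨insert v T, hBT.trans (Finset.subset_insert v T), ?_, ?_⟩
    · rw [Finset.card_insert_of_notMem hvT, hTcard]
      omega
    · have hle := aux_insert_card c.2 v T hvT
      have hle' : ((labPairs c.2 T).card : ℝ) + (eTot c.2 v T : ℝ)
          ≤ ((labPairs c.2 (insert v T)).card : ℝ) := by exact_mod_cast hle
      push_cast
      nlinarith [hv3'.le, hTlab]

lemma aux_cover (CH1 pb : ℝ) (p : Fin K → Fin K → Fin (L+1) → ℝ) (c : Config n K L) (φ : ℝ)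
    (s r : ℕ)
    (hB : ((univ.filter fun v =>
        ¬(H1cond CH1 pb c v ∧ H2cond pb p c v)).card : ℝ) ≤ φ / 3)
    (hH : φ < ((univ \ Hset CH1 pb p c).card : ℝ))
    (hφ0 : 0 ≤ φ)
    (hs : s = ⌊φ/3⌋₊ + ⌈φ/2⌉₊) (hsn : s ≤ n)
    (hrc : r = ⌈φ * ((n:ℝ) * pb) / (Real.log ((n:ℝ) * pb)) ^ 5⌉₊)
    (hD : φ * ((n:ℝ) * pb) / (Real.log ((n:ℝ) * pb)) ^ 5 ≤
      (⌈φ/2⌉₊ : ℝ) * (2 * ((n:ℝ) * pb) / (Real.log ((n:ℝ) * pb)) ^ 5)) :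
    ∃ T F, T ∈ Finset.powersetCard s (univ : Finset (Fin n)) ∧
      F ∈ Finset.powersetCard r (pairsIn T) ∧ ∀ q ∈ F, c.2 q ≠ 0 := by
  set m := ⌈φ/2⌉₊ with hmdef
  have hm : (m : ℝ) ≤ φ / 2 + 1 := by
    have := Nat.ceil_lt_add_one (by positivity : (0:ℝ) ≤ φ / 2)
    exact this.le
  obtain ⟨T0, hBT0, hT0card, hT0lab⟩ := aux_peel CH1 pb p c φ hB hH hφ0 m hm m le_rfl
  have hT0s : T0.card ≤ s := by
    rw [hT0card, hs]
    have : (univ.filter fun v => ¬(H1cond CH1 pb c v ∧ H2cond pb p c v)).card ≤ ⌊φ/3⌋₊ :=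
      Nat.le_floor hB
    omega
  obtain ⟨T, hT0T, hTcard⟩ :=
    Finset.exists_superset_card_eq hT0s (by simpa using hsn)
  have hrT : r ≤ (labPairs c.2 T).card := by
    have h1 : ((labPairs c.2 T0).card : ℝ) ≤ ((labPairs c.2 T).card : ℝ) := by
      exact_mod_cast Finset.card_le_card (labPairs_mono c.2 hT0T)
    rw [hrc]
    exact Nat.ceil_le.mpr (le_trans hD (le_trans hT0lab h1))
  obtain ⟨F, hFsub, hFcard⟩ := Finset.exists_subset_card_eq hrT
  refine ⟨T, F, ?_, ?_, ?_⟩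
  · exact Finset.mem_powersetCard.mpr ⟨Finset.subset_univ T, hTcard⟩
  · exact Finset.mem_powersetCard.mpr ⟨hFsub.trans (labPairs_subset_pairsIn c.2 T), hFcard⟩
  · intro q hq
    have := hFsub hq
    unfold labPairs at this
    rw [Finset.mem_filter] at this
    exact this.2.2.2

end Peel
section Num

lemma aux_pow_self_le (b : ℕ) : (b:ℝ)^b ≤ (b.factorial : ℝ) * Real.exp 1 ^ b := by
  induction b with
  | zero => simp
  | succ b ih =>
    have h1 : ((b:ℝ)+1)^b ≤ Real.exp 1 * (b:ℝ)^b := by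
      rcases Nat.eq_zero_or_pos b with hb | hb
      · subst hb
        simpa using Real.one_le_exp zero_le_one
      · have hb' : (0:ℝ) < b := by exact_mod_cast hb
        have h2 : (1 + 1/(b:ℝ)) ≤ Real.exp (1/(b:ℝ)) := by
          have := Real.add_one_le_exp (1/(b:ℝ)); linarith
        have h3 : (1 + 1/(b:ℝ))^b ≤ Real.exp (1/(b:ℝ))^b :=
          pow_le_pow_left₀ (by positivity) h2 b
        have h4 : Real.exp (1/(b:ℝ))^b = Real.exp 1 := by
          rw [← Real.exp_nat_mul]
          congr 1
          field_simp
        have h5 : ((b:ℝ)+1)^b = (b:ℝ)^b * (1+1/(b:ℝ))^b := by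
          rw [← mul_pow]
          congr 1
          field_simp
        calc ((b:ℝ)+1)^b = (b:ℝ)^b * (1+1/(b:ℝ))^b := h5
          _ ≤ (b:ℝ)^b * Real.exp (1/(b:ℝ))^b :=
              mul_le_mul_of_nonneg_left h3 (by positivity)
          _ = Real.exp 1 * (b:ℝ)^b := by rw [h4]; ring
    have hb0 : (0:ℝ) ≤ (b:ℝ)+1 := by positivity
    have he : (0:ℝ) < Real.exp 1 := Real.exp_pos 1
    calc ((b+1:ℕ):ℝ)^(b+1) = ((b:ℝ)+1) * ((b:ℝ)+1)^b := by push_cast; ring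
      _ ≤ ((b:ℝ)+1) * (Real.exp 1 * (b:ℝ)^b) := by
          exact mul_le_mul_of_nonneg_left h1 hb0
      _ ≤ ((b:ℝ)+1) * (Real.exp 1 * ((b.factorial : ℝ) * Real.exp 1 ^ b)) := by
          refine mul_le_mul_of_nonneg_left ?_ hb0
          exact mul_le_mul_of_nonneg_left ih he.le
      _ = ((b+1).factorial : ℝ) * Real.exp 1 ^ (b+1) := by
          rw [Nat.factorial_succ]
          push_cast
          ring

lemma aux_choose_le (a b : ℕ) : (Nat.choose a b : ℝ) ≤ (Real.exp 1 * a / b) ^ b := by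
  rcases Nat.eq_zero_or_pos b with hb | hb
  · subst hb; simp
  have hb' : (0:ℝ) < b := by exact_mod_cast hb
  have h1 : (Nat.choose a b : ℝ) ≤ (a:ℝ)^b / (b.factorial : ℝ) := by
    have := Nat.choose_le_pow_div (α := ℝ) b a
    simpa using this
  refine h1.trans ?_
  have h2 : (b:ℝ)^b ≤ (b.factorial : ℝ) * Real.exp 1 ^ b := aux_pow_self_le b
  have hfac : (0:ℝ) < (b.factorial : ℝ) := by exact_mod_cast b.factorial_pos
  rw [div_le_iff₀ hfac, div_pow, div_mul_eq_mul_div, le_div_iff₀ (by positivity)]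
  calc (a:ℝ)^b * (b:ℝ)^b ≤ (a:ℝ)^b * ((b.factorial : ℝ) * Real.exp 1 ^ b) :=
        mul_le_mul_of_nonneg_left h2 (by positivity)
    _ = (Real.exp 1 * (a:ℝ))^b * (b.factorial : ℝ) := by rw [mul_pow]; ring

lemma aux_pow_eq_exp (x : ℝ) (hx : 0 < x) (k : ℕ) :
    x ^ k = Real.exp ((k:ℝ) * Real.log x) := by
  rw [← Real.exp_log (pow_pos hx k), Real.log_pow]

lemma aux_log_self_le (x : ℝ) (hx : 16 ≤ x) : Real.log x ≤ x / 2 := by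
  have hx0 : (0:ℝ) < x := by linarith
  have h1 : Real.log x = 2 * Real.log (Real.sqrt x) := by
    rw [Real.log_sqrt hx0.le]; ring
  have h2 : Real.log (Real.sqrt x) ≤ Real.sqrt x - 1 :=
    Real.log_le_sub_one_of_pos (Real.sqrt_pos.mpr hx0)
  have h3 : (4:ℝ) ≤ Real.sqrt x := by
    rw [show (4:ℝ) = Real.sqrt 16 by
      rw [show (16:ℝ) = 4^2 by norm_num, Real.sqrt_sq (by norm_num)]]
    exact Real.sqrt_le_sqrt hx
  have h4 : Real.sqrt x * Real.sqrt x = x := Real.mul_self_sqrt hx0.le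
  nlinarith

end Num
section Num2

set_option maxHeartbeats 1000000 in
lemma aux_numeric (n L : ℕ) (pb φ : ℝ) (hL : 1 ≤ L) (hpb : 0 < pb)
    (hφ3 : 3 ≤ φ)
    (hφle : φ ≤ 1 / (pb * ((n:ℝ)*pb)^5))
    (hC1 : Real.exp 16 ≤ (n:ℝ)*pb)
    (hC2 : (100 + (L:ℝ)) * (Real.log ((n:ℝ)*pb))^5 ≤ (n:ℝ)*pb)
    (hC4 : Real.log (L:ℝ) + 1 ≤ Real.log ((n:ℝ)*pb)) :
    (Nat.choose n (⌊φ/3⌋₊ + ⌈φ/2⌉₊) : ℝ) *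
    (Nat.choose ((⌊φ/3⌋₊ + ⌈φ/2⌉₊) * (⌊φ/3⌋₊ + ⌈φ/2⌉₊))
        (⌈φ * ((n:ℝ)*pb) / (Real.log ((n:ℝ)*pb))^5⌉₊) : ℝ) *
    ((L:ℝ)*pb) ^ (⌈φ * ((n:ℝ)*pb) / (Real.log ((n:ℝ)*pb))^5⌉₊) ≤
    Real.exp (-(φ * ((n:ℝ)*pb) / (4 * (Real.log ((n:ℝ)*pb))^5)) *
      Real.log (2*(n:ℝ)/(φ*(L:ℝ)*(Real.log ((n:ℝ)*pb))^5))) := by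
  set t : ℝ := (n:ℝ)*pb with htdef'
  have htdef : (n:ℝ)*pb = t := rfl
  clear_value t
  clear htdef'
  set lg : ℝ := Real.log t with hlgdef'
  have hlgdef : Real.log t = lg := rfl
  clear_value lg
  clear hlgdef'
  set s : ℕ := ⌊φ/3⌋₊ + ⌈φ/2⌉₊ with hsdef'
  have hsdef : ⌊φ/3⌋₊ + ⌈φ/2⌉₊ = s := rfl
  clear_value s
  clear hsdef'
  set r : ℕ := ⌈φ * t / lg^5⌉₊ with hrdef'
  have hrdef : ⌈φ * t / lg^5⌉₊ = r := rfl
  clear_value r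
  clear hrdef'
  have hφpos : (0:ℝ) < φ := by linarith
  have hLpos : (0:ℝ) < (L:ℝ) := by exact_mod_cast hL
  have htpos : (0:ℝ) < t := lt_of_lt_of_le (Real.exp_pos 16) hC1
  have hn0 : n ≠ 0 := by
    rintro rfl
    rw [show t = 0 by rw [← htdef]; simp] at htpos
    simp at htpos
  have hnpos : (0:ℝ) < (n:ℝ) := by
    have : 0 < n := Nat.pos_of_ne_zero hn0
    exact_mod_cast this
  have hlg16 : (16:ℝ) ≤ lg := hlgdef ▸ ((Real.le_log_iff_exp_le htpos).mpr hC1)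
  have hlgpos : (0:ℝ) < lg := by linarith
  have hlg5pos : (0:ℝ) < lg^5 := by positivity
  -- φ ≤ n / t^6
  have hφn : φ ≤ (n:ℝ) / t^6 := by
    have heq : 1 / (pb * t^5) = (n:ℝ) / t^6 := by
      rw [← htdef]
      have hnne : ((n:ℝ)) ≠ 0 := by positivity
      field_simp
    rw [← heq]
    exact hφle
  -- s bounds
  have hfl : ((⌊φ/3⌋₊ : ℕ):ℝ) ≤ φ/3 := Nat.floor_le (by positivity)
  have hcl : ((⌈φ/2⌉₊ : ℕ):ℝ) < φ/2 + 1 := Nat.ceil_lt_add_one (by positivity)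
  have hcl2 : φ/2 ≤ ((⌈φ/2⌉₊ : ℕ):ℝ) := Nat.le_ceil _
  have hsφ : (s:ℝ) ≤ φ := by
    rcases le_or_gt 6 φ with h6 | h6
    · rw [← hsdef]; push_cast; linarith
    · have hf1 : ⌊φ/3⌋₊ < 2 :=
        (Nat.floor_lt (by positivity : (0:ℝ) ≤ φ/3)).mpr
          (show φ/3 < ((2:ℕ):ℝ) by push_cast; linarith)
      rcases le_or_gt 4 φ with h4 | h4
      · have hc3 : ⌈φ/2⌉₊ ≤ 3 := Nat.ceil_le.mpr (show φ/2 ≤ ((3:ℕ):ℝ) by push_cast; linarith)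
        have hs4 : s ≤ 4 := by rw [← hsdef]; omega
        have : (s:ℝ) ≤ 4 := by exact_mod_cast hs4
        linarith
      · have hc3 : ⌈φ/2⌉₊ ≤ 2 := Nat.ceil_le.mpr (show φ/2 ≤ ((2:ℕ):ℝ) by push_cast; linarith)
        have hs4 : s ≤ 3 := by rw [← hsdef]; omega
        have : (s:ℝ) ≤ 3 := by exact_mod_cast hs4
        linarith
  have hsge : φ/2 ≤ (s:ℝ) := by
    rw [← hsdef]
    push_cast
    linarith
  have hspos : (0:ℝ) < (s:ℝ) := by linarith
  -- r bounds
  have hrge : φ * t / lg^5 ≤ (r:ℝ) := hrdef ▸ Nat.le_ceil _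
  have hrpos : (0:ℝ) < (r:ℝ) := lt_of_lt_of_le (by positivity) hrge
  -- X facts
  set X : ℝ := 2*(n:ℝ)/(φ*(L:ℝ)*lg^5) with hXdef
  have hXpos : (0:ℝ) < X := by positivity
  have hLlg : (L:ℝ) * lg^5 ≤ t := by nlinarith [hlg5pos]
  have hXt5 : t^5 ≤ X := by
    rw [hXdef, le_div_iff₀ (by positivity)]
    have h1 : φ * ((L:ℝ)*lg^5) ≤ ((n:ℝ)/t^6) * t := by
      calc φ * ((L:ℝ)*lg^5) ≤ ((n:ℝ)/t^6) * ((L:ℝ)*lg^5) := by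
            exact mul_le_mul_of_nonneg_right hφn (by positivity)
        _ ≤ ((n:ℝ)/t^6) * t := by
            exact mul_le_mul_of_nonneg_left hLlg (by positivity)
    calc t^5 * (φ * (L:ℝ) * lg^5) = (φ * ((L:ℝ)*lg^5)) * t^5 := by ring
      _ ≤ (((n:ℝ)/t^6) * t) * t^5 := by
          exact mul_le_mul_of_nonneg_right h1 (by positivity)
      _ = (n:ℝ) := by field_simp
      _ ≤ 2*(n:ℝ) := by linarith
  have hlogX : 5 * lg ≤ Real.log X := by
    have h := Real.log_le_log (by positivity) hXt5
    rw [Real.log_pow, hlgdef] at h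
    exact_mod_cast h
  have hlogXpos : (0:ℝ) < Real.log X := by linarith
  set coef : ℝ := φ * t / (4 * lg^5) with hcoefdef
  have hcoefpos : (0:ℝ) < coef := by positivity
  have hr4 : 4 * coef ≤ (r:ℝ) := by
    rw [hcoefdef]
    calc 4 * (φ * t / (4 * lg^5)) = φ * t / lg^5 := by field_simp
      _ ≤ (r:ℝ) := hrge
  -- Zp bound
  set Zp : ℝ := Real.exp 1 * ((s:ℝ)*(s:ℝ)) / (r:ℝ) * ((L:ℝ)*pb) with hZpdef
  have hZppos : (0:ℝ) < Zp := by positivity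
  have hZple : Zp ≤ 2 * Real.exp 1 / X := by
    have h1 : Zp ≤ Real.exp 1 * (φ*φ) / (φ * t / lg^5) * ((L:ℝ)*pb) := by
      rw [hZpdef]
      have hd : (0:ℝ) < φ * t / lg^5 := by positivity
      gcongr
      all_goals first | exact hsφ | exact hrge | positivity | rfl
    refine h1.trans (le_of_eq ?_)
    rw [hXdef, ← htdef]
    have hnne : ((n:ℝ)) ≠ 0 := by positivity
    field_simp
  have hlogZp : Real.log Zp ≤ 2 - Real.log X := by
    have h1 := Real.log_le_log hZppos hZple
    have h2 : Real.log (2 * Real.exp 1 / X) = Real.log 2 + 1 - Real.log X := by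
      rw [Real.log_div (by positivity) (ne_of_gt hXpos), Real.log_mul (by norm_num) (by positivity), Real.log_exp]
    have h3 : Real.log 2 ≤ 1 := by
      have := Real.log_le_sub_one_of_pos (show (0:ℝ) < 2 by norm_num)
      linarith
    linarith
  -- final exponent estimates
  have hterm2 : (r:ℝ) * Real.log Zp ≤ -(39/10) * coef * Real.log X := by
    have h1 : Real.log Zp ≤ -(39/40) * Real.log X := by
      have : (2:ℝ) ≤ Real.log X / 40 := by linarith
      linarith
    calc (r:ℝ) * Real.log Zp ≤ (r:ℝ) * (-(39/40) * Real.log X) :=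
          mul_le_mul_of_nonneg_left h1 (by positivity)
      _ ≤ (4*coef) * (-(39/40) * Real.log X) := by
          have hneg : -(39/40) * Real.log X ≤ 0 := by nlinarith
          exact mul_le_mul_of_nonpos_right hr4 hneg
      _ = -(39/10) * coef * Real.log X := by ring
  have hlogs : Real.log (Real.exp 1 * (n:ℝ) / (s:ℝ)) ≤ 2 * Real.log X := by
    have hloglg : Real.log lg ≤ lg / 2 := aux_log_self_le lg hlg16
    have h1 : Real.exp 1 * (n:ℝ) / (s:ℝ) ≤ Real.exp 1 * (2*(n:ℝ)/φ) := by
      rw [div_le_iff₀ hspos]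
      have h0 : Real.exp 1 * (2*(n:ℝ)/φ) * (φ/2) = Real.exp 1 * (n:ℝ) := by
        field_simp
      calc Real.exp 1 * (n:ℝ) = Real.exp 1 * (2*(n:ℝ)/φ) * (φ/2) := h0.symm
        _ ≤ Real.exp 1 * (2*(n:ℝ)/φ) * (s:ℝ) :=
            mul_le_mul_of_nonneg_left hsge (by positivity)
    have h2 := Real.log_le_log (by positivity) h1
    have h3 : Real.log (Real.exp 1 * (2*(n:ℝ)/φ)) = 1 + Real.log (2*(n:ℝ)/φ) := by
      rw [Real.log_mul (by positivity : (0:ℝ) < Real.exp 1).ne' (by positivity : (0:ℝ) < 2*(n:ℝ)/φ).ne', Real.log_exp]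
    have h4 : Real.log (2*(n:ℝ)/φ) = Real.log X + Real.log ((L:ℝ)*lg^5) := by
      have hX2 : X * ((L:ℝ)*lg^5) = 2*(n:ℝ)/φ := by
        rw [hXdef]
        field_simp
      rw [← hX2, Real.log_mul (ne_of_gt hXpos) (by positivity : (0:ℝ) < (L:ℝ)*lg^5).ne']
    have h5 : Real.log ((L:ℝ)*lg^5) = Real.log (L:ℝ) + 5 * Real.log lg := by
      rw [Real.log_mul (by positivity : (0:ℝ) < (L:ℝ)).ne' (by positivity : (0:ℝ) < lg^5).ne', Real.log_pow]
      norm_num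
    have h6 : Real.log (L:ℝ) + 5 * Real.log lg + 1 ≤ lg + 5 * (lg/2) := by
      have : 5 * Real.log lg ≤ 5 * (lg/2) := by linarith
      linarith
    have h7 : lg + 5*(lg/2) ≤ Real.log X := by linarith
    linarith
  have hterm1 : (s:ℝ) * Real.log (Real.exp 1 * (n:ℝ) / (s:ℝ)) ≤ (29/10) * coef * Real.log X := by
    calc (s:ℝ) * Real.log (Real.exp 1 * (n:ℝ) / (s:ℝ)) ≤ (s:ℝ) * (2 * Real.log X) :=
          mul_le_mul_of_nonneg_left hlogs (by positivity)
      _ ≤ φ * (2 * Real.log X) := by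
          exact mul_le_mul_of_nonneg_right hsφ (by positivity)
      _ ≤ (29/10) * coef * Real.log X := by
          have h100 : 100 * lg^5 ≤ t := by nlinarith [hlg5pos, hLpos]
          have : 2 * φ ≤ (29/10) * coef := by
            have heq : (29/10) * coef = (29*(φ*t)/40)/lg^5 := by
              rw [hcoefdef]
              field_simp
              ring
            rw [heq, le_div_iff₀ hlg5pos]
            nlinarith [mul_le_mul_of_nonneg_left h100 hφpos.le]
          have hmul := mul_le_mul_of_nonneg_right this hlogXpos.le
          linarith [hmul]
  -- assemble
  have hchoose1 : (Nat.choose n s : ℝ) ≤ (Real.exp 1 * (n:ℝ) / (s:ℝ))^s := by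
    have := aux_choose_le n s
    simpa using this
  have hchoose2 : (Nat.choose (s*s) r : ℝ) ≤ (Real.exp 1 * ((s:ℝ)*(s:ℝ)) / (r:ℝ))^r := by
    have h := aux_choose_le (s*s) r
    push_cast at h
    exact h
  have hens : (0:ℝ) < Real.exp 1 * (n:ℝ) / (s:ℝ) := by positivity
  have hesr : (0:ℝ) < Real.exp 1 * ((s:ℝ)*(s:ℝ)) / (r:ℝ) := by positivity
  calc (Nat.choose n s : ℝ) * (Nat.choose (s*s) r : ℝ) * ((L:ℝ)*pb)^r
      ≤ (Real.exp 1 * (n:ℝ) / (s:ℝ))^s *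
        ((Real.exp 1 * ((s:ℝ)*(s:ℝ)) / (r:ℝ))^r * ((L:ℝ)*pb)^r) := by
        have hnn1 : (0:ℝ) ≤ ((L:ℝ)*pb)^r := by positivity
        have hnn2 : (0:ℝ) ≤ (Nat.choose (s*s) r : ℝ) := by positivity
        have hnn3 : (0:ℝ) ≤ (Nat.choose n s : ℝ) := by positivity
        rw [← mul_assoc]
        refine mul_le_mul_of_nonneg_right ?_ hnn1
        exact mul_le_mul hchoose1 hchoose2 hnn2 (by positivity)
    _ = Real.exp ((s:ℝ) * Real.log (Real.exp 1 * (n:ℝ) / (s:ℝ))) * Real.exp ((r:ℝ) * Real.log Zp) := by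
        rw [← mul_pow, aux_pow_eq_exp _ hens, aux_pow_eq_exp _ (show (0:ℝ) < Real.exp 1 * ((s:ℝ)*(s:ℝ)) / (r:ℝ) * ((L:ℝ)*pb) by positivity)]
    _ = Real.exp ((s:ℝ) * Real.log (Real.exp 1 * (n:ℝ) / (s:ℝ)) + (r:ℝ) * Real.log Zp) := by
        rw [← Real.exp_add]
    _ ≤ Real.exp (-coef * Real.log X) := by
        apply Real.exp_le_exp.mpr
        linarith

end Num2
lemma aux_s_le_phi (φ : ℝ) (hφ3 : 3 ≤ φ) : ((⌊φ/3⌋₊ + ⌈φ/2⌉₊ : ℕ) : ℝ) ≤ φ := by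
  have hφpos : (0:ℝ) < φ := by linarith
  have hfl : ((⌊φ/3⌋₊ : ℕ):ℝ) ≤ φ/3 := Nat.floor_le (by positivity)
  have hcl : ((⌈φ/2⌉₊ : ℕ):ℝ) < φ/2 + 1 := Nat.ceil_lt_add_one (by positivity)
  rcases le_or_gt 6 φ with h6 | h6
  · push_cast; linarith
  · have hf1 : ⌊φ/3⌋₊ < 2 :=
      (Nat.floor_lt (by positivity : (0:ℝ) ≤ φ/3)).mpr
        (show φ/3 < ((2:ℕ):ℝ) by push_cast; linarith)
    rcases le_or_gt 4 φ with h4 | h4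
    · have hc3 : ⌈φ/2⌉₊ ≤ 3 := Nat.ceil_le.mpr (show φ/2 ≤ ((3:ℕ):ℝ) by push_cast; linarith)
      have hs4 : ⌊φ/3⌋₊ + ⌈φ/2⌉₊ ≤ 4 := by omega
      have : ((⌊φ/3⌋₊ + ⌈φ/2⌉₊ : ℕ):ℝ) ≤ 4 := by exact_mod_cast hs4
      linarith
    · have hc3 : ⌈φ/2⌉₊ ≤ 2 := Nat.ceil_le.mpr (show φ/2 ≤ ((2:ℕ):ℝ) by push_cast; linarith)
      have hs4 : ⌊φ/3⌋₊ + ⌈φ/2⌉₊ ≤ 3 := by omega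
      have : ((⌊φ/3⌋₊ + ⌈φ/2⌉₊ : ℕ):ℝ) ≤ 3 := by exact_mod_cast hs4
      linarith
section MainAux

lemma aux_eventual (L : ℕ) (hL : 1 ≤ L) :
    ∀ᶠ x : ℝ in atTop, Real.exp 16 ≤ x ∧
      (100 + (L:ℝ)) * (Real.log x)^5 ≤ x ∧ Real.log (L:ℝ) + 1 ≤ Real.log x := by
  have hLpos : (0:ℝ) < (L:ℝ) := by exact_mod_cast hL
  have h1 : ∀ᶠ x : ℝ in atTop, Real.exp 16 ≤ x := eventually_ge_atTop _
  have h3 : ∀ᶠ x : ℝ in atTop, Real.log (L:ℝ) + 1 ≤ Real.log x :=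
    Real.tendsto_log_atTop.eventually_ge_atTop _
  have h2 : ∀ᶠ x : ℝ in atTop, (100 + (L:ℝ)) * (Real.log x)^5 ≤ x := by
    have ht := Real.tendsto_pow_log_div_mul_add_atTop 1 0 5 one_ne_zero
    have hev : ∀ᶠ x : ℝ in atTop,
        Real.log x ^ 5 / (1 * x + 0) < (100 + (L:ℝ))⁻¹ :=
      ht.eventually_lt_const (by positivity)
    filter_upwards [hev, eventually_gt_atTop (0:ℝ)] with x hx hx0
    rw [one_mul, add_zero] at hx
    rw [div_lt_iff₀ hx0] at hx
    have h100 : (0:ℝ) < 100 + (L:ℝ) := by positivity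
    calc (100 + (L:ℝ)) * (Real.log x)^5 ≤ (100 + (L:ℝ)) * ((100 + (L:ℝ))⁻¹ * x) := by
          refine mul_le_mul_of_nonneg_left ?_ h100.le
          linarith
      _ = x := by field_simp
  filter_upwards [h1, h2, h3] with x a b c using ⟨a, b, c⟩

end MainAux

open Classical in
/-- **Lemma B.5 (control of `|I∖H|`).** For `φ ≤ 1/(p̄(np̄)⁵)`, the probability that at most
`φ/3` nodes fail (H1) or (H2) and yet `|I∖H| > φ` is at most
`exp(−(φ·n·p̄/(4 log⁵(n·p̄)))·log(2n/(φ·L·log⁵(n·p̄))))` (in the regime `n·p̄ → ∞`). -/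
theorem statement6
    (K L : ℕ) (hK : 2 ≤ K) (hL : 1 ≤ L)
    (α : Fin K → ℝ) (hαpos : ∀ k, 0 < α k) (hαsum : ∑ k, α k = 1)
    (p : ℕ → Fin K → Fin K → Fin (L + 1) → ℝ)
    (hp0 : ∀ n i j ℓ, 0 ≤ p n i j ℓ) (hp1 : ∀ n i j ℓ, p n i j ℓ ≤ 1)
    (hpsym : ∀ n i j ℓ, p n i j ℓ = p n j i ℓ)
    (hpsum : ∀ n i j, ∑ ℓ, p n i j ℓ = 1)
    (pbar : ℕ → ℝ)
    (hpbar : ∀ n, IsGreatest {x | ∃ i j, ∃ ℓ : Fin (L + 1), ℓ ≠ 0 ∧ x = p n i j ℓ} (pbar n))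
    (hgrow : Tendsto (fun n : ℕ => (n : ℝ) * pbar n) atTop atTop) :
    ∃ CH1 : ℝ, 0 < CH1 ∧
      ∀ φ : ℕ → ℝ, (∀ n, 0 < φ n) →
        (∀ n : ℕ, φ n ≤ 1 / (pbar n * ((n : ℝ) * pbar n) ^ 5)) →
        ∀ᶠ n : ℕ in atTop,
          Pr α (p n) {c : Config n K L |
              (((univ.filter fun v =>
                  ¬(H1cond CH1 (pbar n) c v ∧ H2cond (pbar n) (p n) c v)).card : ℝ) ≤ φ n / 3)
              ∧ φ n < ((univ \ Hset CH1 (pbar n) (p n) c).card : ℝ)} ≤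
            Real.exp (-(φ n * ((n : ℝ) * pbar n) / (4 * (Real.log ((n : ℝ) * pbar n)) ^ 5)) *
              Real.log (2 * (n : ℝ) / (φ n * L * (Real.log ((n : ℝ) * pbar n)) ^ 5))) := by
  refine ⟨1, one_pos, ?_⟩
  intro φ hφpos hφle
  filter_upwards [hgrow.eventually (aux_eventual L hL)] with n hn
  obtain ⟨hC1, hC2, hC4⟩ := hn
  -- basic positivity facts
  have hpb0 : 0 ≤ pbar n := by
    obtain ⟨i, j, ℓ0, hℓ0, heq⟩ := (hpbar n).1
    rw [heq]
    exact hp0 n i j ℓ0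
  have htpos : (0:ℝ) < (n:ℝ) * pbar n := lt_of_lt_of_le (Real.exp_pos 16) hC1
  have hn0 : n ≠ 0 := by
    rintro rfl
    simp at htpos
  have hnpos : (0:ℝ) < (n:ℝ) := by
    have : 0 < n := Nat.pos_of_ne_zero hn0
    exact_mod_cast this
  have hpbpos : 0 < pbar n := by
    rcases lt_or_eq_of_le hpb0 with h | h
    · exact h
    · exfalso; rw [← h] at htpos; simp at htpos
  have hub : ∀ i j ℓ, ℓ ≠ 0 → p n i j ℓ ≤ pbar n := fun i j ℓ h => (hpbar n).2 ⟨i, j, ℓ, h, rfl⟩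
  have hlg16 : (16:ℝ) ≤ Real.log ((n:ℝ) * pbar n) :=
    (Real.le_log_iff_exp_le htpos).mpr hC1
  have hlgpos : (0:ℝ) < Real.log ((n:ℝ) * pbar n) := by linarith
  by_cases hφ3 : φ n < 3
  · -- the event is empty
    have hEv : {c : Config n K L |
        (((univ.filter fun v =>
            ¬(H1cond 1 (pbar n) c v ∧ H2cond (pbar n) (p n) c v)).card : ℝ) ≤ φ n / 3)
        ∧ φ n < ((univ \ Hset 1 (pbar n) (p n) c).card : ℝ)} = ∅ := by
      rw [Set.eq_empty_iff_forall_notMem]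
      rintro c ⟨h1, h2⟩
      have hcard : (univ.filter fun v =>
          ¬(H1cond 1 (pbar n) c v ∧ H2cond (pbar n) (p n) c v)).card = 0 := by
        by_contra hne
        have h1' : (1:ℝ) ≤ ((univ.filter fun v =>
            ¬(H1cond 1 (pbar n) c v ∧ H2cond (pbar n) (p n) c v)).card : ℝ) := by
          exact_mod_cast Nat.one_le_iff_ne_zero.mpr hne
        linarith
      have hall : ∀ v : Fin n, H1cond 1 (pbar n) c v ∧ H2cond (pbar n) (p n) c v := by
        intro v
        by_contra hv
        have hmem : v ∈ univ.filter fun v =>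
            ¬(H1cond 1 (pbar n) c v ∧ H2cond (pbar n) (p n) c v) :=
          Finset.mem_filter.mpr ⟨Finset.mem_univ v, hv⟩
        rw [Finset.card_eq_zero.mp hcard] at hmem
        exact absurd hmem (Finset.notMem_empty v)
      have hgood : GoodSet 1 (pbar n) (p n) c univ := by
        intro v _
        refine ⟨(hall v).1, (hall v).2, ?_⟩
        rw [Finset.sdiff_self]
        have h0 : eTot c.2 v (∅ : Finset (Fin n)) = 0 := by simp [eTot, eCnt]
        rw [h0]
        push_cast
        exact div_nonneg (by linarith) (pow_nonneg hlgpos.le 5)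
      have hHuniv : Hset 1 (pbar n) (p n) c = univ :=
        le_antisymm (Finset.subset_univ _) (aux_good_subset_Hset hgood)
      rw [hHuniv, Finset.sdiff_self] at h2
      simp at h2
      linarith [hφpos n]
    rw [hEv]
    have hPr0 : Pr α (p n) (∅ : Set (Config n K L)) = 0 := by
      unfold Pr
      simp
    rw [hPr0]
    positivity
  · -- main case
    push_neg at hφ3
    have hφposn := hφpos n
    set sn : ℕ := ⌊φ n / 3⌋₊ + ⌈φ n / 2⌉₊ with hsndef
    set rn : ℕ := ⌈φ n * ((n:ℝ) * pbar n) / (Real.log ((n:ℝ) * pbar n)) ^ 5⌉₊ with hrndef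
    have hsφ : (sn:ℝ) ≤ φ n := aux_s_le_phi (φ n) hφ3
    have htge1 : (1:ℝ) ≤ (n:ℝ) * pbar n := by
      have := Real.one_le_exp (by norm_num : (0:ℝ) ≤ 16)
      linarith
    have hφn6 : φ n ≤ (n:ℝ) / ((n:ℝ) * pbar n) ^ 6 := by
      have heq : 1 / (pbar n * ((n:ℝ) * pbar n) ^ 5) = (n:ℝ) / ((n:ℝ) * pbar n) ^ 6 := by
        field_simp
      rw [← heq]
      exact hφle n
    have hφlen : φ n ≤ (n:ℝ) := by
      have h6 : (1:ℝ) ≤ ((n:ℝ) * pbar n) ^ 6 := one_le_pow₀ htge1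
      have := div_le_self hnpos.le h6
      linarith
    have hsn : sn ≤ n := by
      have : (sn:ℝ) ≤ (n:ℝ) := le_trans hsφ hφlen
      exact_mod_cast this
    have hD : φ n * ((n:ℝ) * pbar n) / (Real.log ((n:ℝ) * pbar n)) ^ 5 ≤
        (⌈φ n / 2⌉₊ : ℝ) * (2 * ((n:ℝ) * pbar n) / (Real.log ((n:ℝ) * pbar n)) ^ 5) := by
      have heq : φ n * ((n:ℝ) * pbar n) / (Real.log ((n:ℝ) * pbar n)) ^ 5
          = (φ n / 2) * (2 * ((n:ℝ) * pbar n) / (Real.log ((n:ℝ) * pbar n)) ^ 5) := by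
        field_simp
      rw [heq]
      refine mul_le_mul_of_nonneg_right (Nat.le_ceil _) ?_
      exact div_nonneg (by linarith) (pow_nonneg hlgpos.le 5)
    have hstep1 : Pr α (p n) {c : Config n K L |
        (((univ.filter fun v =>
            ¬(H1cond 1 (pbar n) c v ∧ H2cond (pbar n) (p n) c v)).card : ℝ) ≤ φ n / 3)
        ∧ φ n < ((univ \ Hset 1 (pbar n) (p n) c).card : ℝ)} ≤
        ∑ i ∈ (Finset.powersetCard sn (univ : Finset (Fin n))).sigma
            (fun T => Finset.powersetCard rn (pairsIn T)),
          Pr α (p n) {c : Config n K L | ∀ q ∈ i.2, c.2 q ≠ 0} := by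
      refine aux_Pr_le_sum α (p n) (fun k => (hαpos k).le) (hp0 n) _ _ _ ?_
      rintro c ⟨h1, h2⟩
      obtain ⟨T, F, hT, hF, hq⟩ :=
        aux_cover 1 (pbar n) (p n) c (φ n) sn rn h1 h2 (by linarith) hsndef hsn hrndef hD
      exact ⟨⟨T, F⟩, Finset.mem_sigma.mpr ⟨hT, hF⟩, hq⟩
    have hLpb0 : (0:ℝ) ≤ (L:ℝ) * pbar n := mul_nonneg (Nat.cast_nonneg L) hpb0
    have hstep2 : (∑ i ∈ (Finset.powersetCard sn (univ : Finset (Fin n))).sigma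
            (fun T => Finset.powersetCard rn (pairsIn T)),
          Pr α (p n) {c : Config n K L | ∀ q ∈ i.2, c.2 q ≠ 0}) ≤
        (Nat.choose n sn : ℝ) * ((Nat.choose (sn*sn) rn : ℝ) * ((L:ℝ) * pbar n) ^ rn) := by
      rw [Finset.sum_sigma]
      calc (∑ T ∈ Finset.powersetCard sn (univ : Finset (Fin n)),
            ∑ F ∈ Finset.powersetCard rn (pairsIn T),
              Pr α (p n) {c : Config n K L | ∀ q ∈ F, c.2 q ≠ 0})
          ≤ ∑ T ∈ Finset.powersetCard sn (univ : Finset (Fin n)),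
            ∑ F ∈ Finset.powersetCard rn (pairsIn T), ((L:ℝ) * pbar n) ^ rn := by
            refine Finset.sum_le_sum fun T _ => Finset.sum_le_sum fun F hF => ?_
            have hFcard : F.card = rn := (Finset.mem_powersetCard.mp hF).2
            have hPrF := aux_Pr_all_labeled α (p n) (fun k => (hαpos k).le) hαsum
              (hp0 n) (hpsum n) (pbar n) hpb0 hub F
            rwa [hFcard] at hPrF
        _ = ∑ T ∈ Finset.powersetCard sn (univ : Finset (Fin n)),
            ((Nat.choose (pairsIn T).card rn : ℝ) * ((L:ℝ) * pbar n) ^ rn) := by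
            refine Finset.sum_congr rfl fun T _ => ?_
            rw [Finset.sum_const, Finset.card_powersetCard, nsmul_eq_mul]
        _ ≤ ∑ T ∈ Finset.powersetCard sn (univ : Finset (Fin n)),
            ((Nat.choose (sn*sn) rn : ℝ) * ((L:ℝ) * pbar n) ^ rn) := by
            refine Finset.sum_le_sum fun T hT => ?_
            refine mul_le_mul_of_nonneg_right ?_ (by positivity)
            have hTcard : T.card = sn := (Finset.mem_powersetCard.mp hT).2
            have hcc := Nat.choose_le_choose rn
              (le_trans (aux_pairsIn_card T) (by rw [hTcard]))
            exact_mod_cast hcc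
        _ = (Nat.choose n sn : ℝ) * ((Nat.choose (sn*sn) rn : ℝ) * ((L:ℝ) * pbar n) ^ rn) := by
            rw [Finset.sum_const, Finset.card_powersetCard, Finset.card_univ,
              Fintype.card_fin, nsmul_eq_mul]
    have hstep3 := aux_numeric n L (pbar n) (φ n) hL hpbpos hφ3 (hφle n) hC1 hC2 hC4
    rw [← hsndef, ← hrndef] at hstep3
    calc Pr α (p n) {c : Config n K L |
        (((univ.filter fun v =>
            ¬(H1cond 1 (pbar n) c v ∧ H2cond (pbar n) (p n) c v)).card : ℝ) ≤ φ n / 3)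
        ∧ φ n < ((univ \ Hset 1 (pbar n) (p n) c).card : ℝ)}
        ≤ (Nat.choose n sn : ℝ) * ((Nat.choose (sn*sn) rn : ℝ) * ((L:ℝ) * pbar n) ^ rn) :=
          le_trans hstep1 hstep2
      _ ≤ Real.exp (-(φ n * ((n:ℝ) * pbar n) / (4 * (Real.log ((n:ℝ) * pbar n)) ^ 5)) *
            Real.log (2 * (n:ℝ) / (φ n * (L:ℝ) * (Real.log ((n:ℝ) * pbar n)) ^ 5))) := by
          rw [← mul_assoc]
          exact hstep3
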